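/- Preimage interval lemma: if f is a quasi-isometry from α to β with constants A, B, then there exist constants A' ≥ 1 and B' ≥ 0 such that for all x ≤ y in ℕ with f⁻¹([x,y]) nonempty, (1/A')·(y−x) − B' ≤ max f⁻¹([x,y]) − min f⁻¹([x,y]) ≤ A'·(y−x) + B'. -/
import Mathlib


def IsQI {Γ : Type*} (α β : ℕ → Γ) (f : ℕ → ℕ) (A B : ℝ) : Prop :=
  1 ≤ A ∧ 0 ≤ B ∧ (∀ n, α n = β (f n)) ∧
  (∀ x y : ℕ, (1 / A) * |(x : ℝ) - (y : ℝ)| - B ≤ |(f x : ℝ) - (f y : ℝ)| ∧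
      |(f x : ℝ) - (f y : ℝ)| ≤ A * |(x : ℝ) - (y : ℝ)| + B) ∧
  (∀ m : ℕ, ∃ x : ℕ, |(m : ℝ) - (f x : ℝ)| ≤ A)

/-- `α ≤_QI β`: there is a quasi-isometry from `α` to `β`. -/
def QI {Γ : Type*} (α β : ℕ → Γ) : Prop := ∃ f A B, IsQI α β f A B

/-- Discrete intermediate value: if a walk has bounded upward steps, starts
at most `t` and at time `k` is at least `t`, then at some time it is in
`[t, t + C]`. -/
lemma ivt_aux (g : ℕ → ℕ) (C : ℝ) (hC : 0 ≤ C)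
    (hstep : ∀ i, (g (i + 1) : ℝ) ≤ (g i : ℝ) + C)
    (t : ℕ) (h0 : g 0 ≤ t) :
    ∀ k, t ≤ g k → ∃ i, t ≤ g i ∧ (g i : ℝ) ≤ (t : ℝ) + C := by
  intro k
  induction k with
  | zero =>
    intro hk
    refine ⟨0, hk, ?_⟩
    have : g 0 = t := le_antisymm h0 hk
    rw [this]; linarith
  | succ k ih =>
    intro hk
    by_cases hgk : t ≤ g k
    · exact ih hgk
    · push_neg at hgk
      refine ⟨k + 1, hk, ?_⟩
      have h1 : (g k : ℝ) ≤ (t : ℝ) := by exact_mod_cast hgk.le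
      calc (g (k + 1) : ℝ) ≤ (g k : ℝ) + C := hstep k
        _ ≤ (t : ℝ) + C := by linarith

theorem preimage_interval_lemma {Γ : Type*} (α β : ℕ → Γ) (f : ℕ → ℕ) (A B : ℝ)
    (h : IsQI α β f A B) :
    ∃ A' B' : ℝ, 1 ≤ A' ∧ 0 ≤ B' ∧ ∀ x y : ℕ, x ≤ y →
      (f ⁻¹' Set.Icc x y).Nonempty →
      (f ⁻¹' Set.Icc x y).Finite ∧
      (1 / A') * ((y : ℝ) - (x : ℝ)) - B' ≤
        (Nat.cast (sSup (f ⁻¹' Set.Icc x y)) : ℝ) - Nat.cast (sInf (f ⁻¹' Set.Icc x y)) ∧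
      (Nat.cast (sSup (f ⁻¹' Set.Icc x y)) : ℝ) - Nat.cast (sInf (f ⁻¹' Set.Icc x y)) ≤
        A' * ((y : ℝ) - (x : ℝ)) + B' := by
  obtain ⟨hA, hB, -, hQI, hsurj⟩ := h
  have hA0 : (0 : ℝ) < A := by linarith
  set a : ℕ := ⌈A⌉₊ with ha_def
  set c : ℕ := ⌈A + B⌉₊ with hc_def
  have haA : A ≤ (a : ℝ) := Nat.le_ceil A
  have hcAB : A + B ≤ (c : ℝ) := Nat.le_ceil (A + B)
  have hCnn : (0 : ℝ) ≤ A + B := by linarith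
  -- small-step bound
  have hstep1 : ∀ u v : ℕ, u ≤ v + 1 → v ≤ u + 1 → |(f u : ℝ) - (f v : ℝ)| ≤ A + B := by
    intro u v h1 h2
    have hq := (hQI u v).2
    have h1' : (u : ℝ) ≤ (v : ℝ) + 1 := by exact_mod_cast h1
    have h2' : (v : ℝ) ≤ (u : ℝ) + 1 := by exact_mod_cast h2
    have habs : |(u : ℝ) - (v : ℝ)| ≤ 1 := by
      rw [abs_le]; constructor <;> linarith
    nlinarith [abs_nonneg ((u : ℝ) - (v : ℝ))]
  -- reachability: between a point mapping below t and one mapping above t,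
  -- some point maps into [t, t + (A+B)]
  have reach : ∀ u v t : ℕ, f u ≤ t → t ≤ f v →
      ∃ w, t ≤ f w ∧ (f w : ℝ) ≤ (t : ℝ) + (A + B) := by
    intro u v t hu hv
    rcases le_total u v with huv | huv
    · have hstep : ∀ i, (f (u + (i + 1)) : ℝ) ≤ (f (u + i) : ℝ) + (A + B) := by
        intro i
        have := hstep1 (u + (i + 1)) (u + i) (by omega) (by omega)
        have := abs_le.1 this
        linarith [this.2]
      obtain ⟨i, hi1, hi2⟩ := ivt_aux (fun n => f (u + n)) (A + B) hCnn hstep t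
        (by simpa using hu) (v - u) (by simpa [Nat.add_sub_cancel' huv] using hv)
      exact ⟨u + i, hi1, hi2⟩
    · have hstep : ∀ i, (f (u - (i + 1)) : ℝ) ≤ (f (u - i) : ℝ) + (A + B) := by
        intro i
        have := hstep1 (u - (i + 1)) (u - i) (by omega) (by omega)
        have := abs_le.1 this
        linarith [this.2]
      obtain ⟨i, hi1, hi2⟩ := ivt_aux (fun n => f (u - n)) (A + B) hCnn hstep t
        (by simpa using hu) (u - v) (by simpa [Nat.sub_sub_self huv] using hv)
      exact ⟨u - i, hi1, hi2⟩
  refine ⟨A, A * B + 2 * a + 2 * c + B, hA, by positivity, ?_⟩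
  intro x y hxy ⟨p, hp⟩
  set S : Set ℕ := f ⁻¹' Set.Icc x y with hS_def
  have hpS : p ∈ S := hp
  -- diameter bound for elements of S
  have hdiam : ∀ u ∈ S, ∀ v ∈ S, |(u : ℝ) - (v : ℝ)| ≤ A * (((y : ℝ) - x) + B) := by
    intro u hu v hv
    obtain ⟨hu1, hu2⟩ := hu
    obtain ⟨hv1, hv2⟩ := hv
    have hxy' : ∀ {n : ℕ}, x ≤ n → n ≤ y → (x : ℝ) ≤ (n : ℝ) ∧ (n : ℝ) ≤ (y : ℝ) := by
      intro n h1 h2; exact ⟨by exact_mod_cast h1, by exact_mod_cast h2⟩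
    obtain ⟨hu1', hu2'⟩ := hxy' hu1 hu2
    obtain ⟨hv1', hv2'⟩ := hxy' hv1 hv2
    have habs : |(f u : ℝ) - (f v : ℝ)| ≤ (y : ℝ) - x := by
      rw [abs_le]; constructor <;> linarith
    have hq := (hQI u v).1
    have hdiv : (1 / A) * |(u : ℝ) - (v : ℝ)| ≤ ((y : ℝ) - x) + B := by linarith
    rw [one_div, inv_mul_le_iff₀ hA0] at hdiv
    linarith
  -- finiteness
  have hfin : S.Finite := by
    apply Set.Finite.subset (Set.finite_Iic (p + ⌈A * (((y : ℝ) - x) + B)⌉₊))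
    intro u hu
    have := hdiam u hu p hpS
    have h1 : (u : ℝ) ≤ (p : ℝ) + A * (((y : ℝ) - x) + B) := by
      have := abs_le.1 this; linarith [this.2]
    have h2 : A * (((y : ℝ) - x) + B) ≤ (⌈A * (((y : ℝ) - x) + B)⌉₊ : ℝ) :=
      Nat.le_ceil _
    have : (u : ℝ) ≤ ((p + ⌈A * (((y : ℝ) - x) + B)⌉₊ : ℕ) : ℝ) := by
      push_cast; linarith
    exact_mod_cast this
  have hne : S.Nonempty := ⟨p, hpS⟩
  have hbdd : BddAbove S := hfin.bddAbove
  have hqS : sSup S ∈ S := Nat.sSup_mem hne hbdd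
  have hmS : sInf S ∈ S := Nat.sInf_mem hne
  have hmemle : ∀ u ∈ S, sInf S ≤ u ∧ u ≤ sSup S := fun u hu =>
    ⟨Nat.sInf_le hu, le_csSup hbdd hu⟩
  have hmq : sInf S ≤ sSup S := (hmemle _ hqS).1
  have hmq' : ((sInf S : ℕ) : ℝ) ≤ ((sSup S : ℕ) : ℝ) := by exact_mod_cast hmq
  refine ⟨hfin, ?_, ?_⟩
  · -- lower bound
    by_cases hy : y < x + 2 * a + 2 * c
    · -- small interval: LHS is nonpositive
      have hy' : (y : ℝ) < (x : ℝ) + 2 * a + 2 * c := by exact_mod_cast hy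
      have hyx : (0 : ℝ) ≤ (y : ℝ) - x := by
        have : (x : ℝ) ≤ y := by exact_mod_cast hxy
        linarith
      have h1A : 1 / A ≤ 1 := by rw [div_le_one hA0]; exact hA
      have h1A0 : 0 < 1 / A := by positivity
      have : (1 / A) * ((y : ℝ) - x) ≤ (y : ℝ) - x := by nlinarith
      have hAB0 : (0 : ℝ) ≤ A * B := mul_nonneg hA0.le hB
      linarith
    · push_neg at hy
      have hy' : (x : ℝ) + 2 * a + 2 * c ≤ (y : ℝ) := by exact_mod_cast hy
      have hc1 : (1 : ℝ) ≤ c := by linarith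
      have ha0 : (0 : ℝ) ≤ a := Nat.cast_nonneg a
      -- points mapping near x and near y
      obtain ⟨u, hu⟩ := hsurj x
      obtain ⟨v, hv⟩ := hsurj y
      have hu' : (f u : ℝ) ≤ (x : ℝ) + A := by have := abs_le.1 hu; linarith [this.1]
      have hv' : (y : ℝ) - A ≤ (f v : ℝ) := by have := abs_le.1 hv; linarith [this.2]
      -- first point w1 with f w1 near x inside [x,y]
      have hu1 : f u ≤ x + a := by
        have : (f u : ℝ) ≤ ((x + a : ℕ) : ℝ) := by push_cast; linarith
        exact_mod_cast this
      have hv1 : x + a ≤ f v := by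
        have : ((x + a : ℕ) : ℝ) ≤ (f v : ℝ) := by push_cast; linarith
        exact_mod_cast this
      obtain ⟨w1, hw1a, hw1b⟩ := reach u v (x + a) hu1 hv1
      have hw1x : x ≤ f w1 := le_trans (Nat.le_add_right x a) hw1a
      have hw1b' : (f w1 : ℝ) ≤ (x : ℝ) + a + c := by push_cast at hw1b ⊢; linarith
      have hw1y : f w1 ≤ y := by
        have : (f w1 : ℝ) ≤ (y : ℝ) := by linarith
        exact_mod_cast this
      have hw1S : w1 ∈ S := ⟨hw1x, hw1y⟩
      -- second point w2 with f w2 near y inside [x,y]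
      set t2 : ℕ := y - (a + c) with ht2_def
      have hac_le : a + c ≤ y := by omega
      have ht2 : (t2 : ℝ) = (y : ℝ) - (a + c) := by
        rw [ht2_def]; push_cast [Nat.cast_sub hac_le]; ring
      have hu2 : f w1 ≤ t2 := by
        have : (f w1 : ℝ) ≤ (t2 : ℝ) := by rw [ht2]; push_cast; linarith
        exact_mod_cast this
      have hv2 : t2 ≤ f v := by
        have : (t2 : ℝ) ≤ (f v : ℝ) := by rw [ht2]; push_cast; linarith
        exact_mod_cast this
      obtain ⟨w2, hw2a, hw2b⟩ := reach w1 v t2 hu2 hv2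
      have hw2a' : (t2 : ℝ) ≤ (f w2 : ℝ) := by exact_mod_cast hw2a
      have hw2x : x ≤ f w2 := by
        have : (x : ℝ) ≤ (f w2 : ℝ) := by rw [ht2] at hw2a'; push_cast at hw2a' ⊢; linarith
        exact_mod_cast this
      have hw2y : f w2 ≤ y := by
        have : (f w2 : ℝ) ≤ (y : ℝ) := by rw [ht2] at hw2b; push_cast at hw2b ⊢; linarith
        exact_mod_cast this
      have hw2S : w2 ∈ S := ⟨hw2x, hw2y⟩
      -- f w2 - f w1 is large
      have hgap : ((y : ℝ) - x) - 2 * a - 2 * c ≤ (f w2 : ℝ) - (f w1 : ℝ) := by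
        rw [ht2] at hw2a'; push_cast at hw2a' hw1b' ⊢; linarith
      -- so w1, w2 are far apart
      have hq2 := (hQI w2 w1).2
      have habs_le : (f w2 : ℝ) - (f w1 : ℝ) ≤ |(f w2 : ℝ) - (f w1 : ℝ)| := le_abs_self _
      have hww : |(w2 : ℝ) - (w1 : ℝ)| ≤ ((sSup S : ℕ) : ℝ) - ((sInf S : ℕ) : ℝ) := by
        obtain ⟨h1, h2⟩ := hmemle w1 hw1S
        obtain ⟨h3, h4⟩ := hmemle w2 hw2S
        have h1' : ((sInf S : ℕ) : ℝ) ≤ (w1 : ℝ) := by exact_mod_cast h1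
        have h2' : (w1 : ℝ) ≤ ((sSup S : ℕ) : ℝ) := by exact_mod_cast h2
        have h3' : ((sInf S : ℕ) : ℝ) ≤ (w2 : ℝ) := by exact_mod_cast h3
        have h4' : (w2 : ℝ) ≤ ((sSup S : ℕ) : ℝ) := by exact_mod_cast h4
        rw [abs_le]; constructor <;> linarith
      have hkey : ((y : ℝ) - x) - 2 * a - 2 * c ≤
          A * (((sSup S : ℕ) : ℝ) - ((sInf S : ℕ) : ℝ)) + B := by
        have h5 : A * |(w2 : ℝ) - (w1 : ℝ)| ≤
            A * (((sSup S : ℕ) : ℝ) - ((sInf S : ℕ) : ℝ)) :=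
          mul_le_mul_of_nonneg_left hww hA0.le
        linarith
      -- conclude
      rw [one_div, sub_le_iff_le_add, inv_mul_le_iff₀ hA0]
      have hAB0 : (0 : ℝ) ≤ A * B := mul_nonneg hA0.le hB
      have hT0 : (0 : ℝ) ≤ A * B + 2 * a + 2 * c + B := by positivity
      have hT : A * B + 2 * (a : ℝ) + 2 * c + B ≤ A * (A * B + 2 * a + 2 * c + B) :=
        le_mul_of_one_le_left hT0 hA
      have hexp : A * (((sSup S : ℕ) : ℝ) - ((sInf S : ℕ) : ℝ) + (A * B + 2 * a + 2 * c + B))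
          = A * (((sSup S : ℕ) : ℝ) - ((sInf S : ℕ) : ℝ)) + A * (A * B + 2 * a + 2 * c + B) := by
        ring
      rw [hexp]
      linarith
  · -- upper bound
    have := hdiam (sSup S) hqS (sInf S) hmS
    have h1 : ((sSup S : ℕ) : ℝ) - ((sInf S : ℕ) : ℝ) ≤ A * (((y : ℝ) - x) + B) := by
      have := abs_le.1 this; linarith [this.2]
    have hAB : A * (((y : ℝ) - x) + B) = A * ((y : ℝ) - x) + A * B := by ring
    rw [hAB] at h1
    linarith [(Nat.cast_nonneg a : (0:ℝ) ≤ (a : ℝ)), (Nat.cast_nonneg c : (0:ℝ) ≤ (c : ℝ))]
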